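/- There exists a universal constant C > 0 such that for every M ≥ 1 and every r > 0, defining g_M(r) := 4e^M r^M if r ≥ 1 and g_M(r) := 4·max{e r^{1/M}, e^M r} if 0 < r < 1, one has |ln((1 + |ln g_M(r)|)/(1 + |ln r|))| ≤ C(1 + ln(1 + M)). -/
import Mathlib


open Real

noncomputable section

/-- `g_M(r) := 4e^M r^M` if `r ≥ 1`, `4 max{e r^{1/M}, e^M r}` if `0 < r < 1`. -/
def gFun (M r : ℝ) : ℝ :=
  if 1 ≤ r then 4 * Real.exp M * r ^ M
  else 4 * max (Real.exp 1 * r ^ (1 / M)) (Real.exp M * r)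

set_option maxHeartbeats 1600000 in
/-- the logarithmic distortion of `g_M` is `O(1 + ln(1+M))`. -/
theorem log_distortion_of_gFun :
    ∃ C > (0:ℝ), ∀ M ≥ (1:ℝ), ∀ r > (0:ℝ),
      |Real.log ((1 + |Real.log (gFun M r)|) / (1 + |Real.log r|))| ≤
        C * (1 + Real.log (1 + M)) := by
  refine ⟨7, by norm_num, ?_⟩
  intro M hM r hr
  have hM0 : (0:ℝ) < M := lt_of_lt_of_le one_pos hM
  set L : ℝ := |Real.log r| with hLdef
  have hL0 : (0:ℝ) ≤ L := abs_nonneg _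
  have h4a : (0:ℝ) ≤ Real.log 4 := Real.log_nonneg (by norm_num)
  have h4b : Real.log 4 ≤ 3 := by
    have := Real.add_one_le_exp (Real.log 4)
    have h := Real.log_le_sub_one_of_pos (show (0:ℝ) < 4 by norm_num)
    linarith
  have key : 1 + |Real.log (gFun M r)| ≤ (1 + 8*M) * (1 + L) ∧
      1 + L ≤ (1 + 8*M) * (1 + |Real.log (gFun M r)|) := by
    by_cases hr1 : 1 ≤ r
    · -- r ≥ 1
      have hLr : L = Real.log r := abs_of_nonneg (Real.log_nonneg hr1)
      have hlg : Real.log (gFun M r) = Real.log 4 + M + M * Real.log r := by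
        rw [gFun, if_pos hr1, Real.log_mul (by positivity) (Real.rpow_pos_of_pos hr M).ne',
          Real.log_mul (by norm_num) (Real.exp_ne_zero M), Real.log_exp, Real.log_rpow hr]
      have hlgpos : 0 ≤ Real.log (gFun M r) := by
        rw [hlg, ← hLr]; nlinarith [mul_nonneg hM0.le hL0]
      rw [abs_of_nonneg hlgpos, hlg, ← hLr]
      constructor
      · nlinarith [mul_nonneg hM0.le hL0, mul_nonneg hL0 hL0]
      · nlinarith [mul_nonneg hM0.le hL0, mul_nonneg (mul_nonneg hM0.le hM0.le) hL0,
          mul_nonneg hM0.le (mul_nonneg hM0.le hL0)]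
    · -- 0 < r < 1
      have hrlt : r < 1 := lt_of_not_ge hr1
      have hx : Real.log r < 0 := Real.log_neg hr hrlt
      have hLx : L = -Real.log r := abs_of_neg hx
      set x : ℝ := Real.log r with hxdef
      have ha : (0:ℝ) < Real.exp 1 * r ^ (1 / M) := by positivity
      have hb : (0:ℝ) < Real.exp M * r := by positivity
      have hla : Real.log (Real.exp 1 * r ^ (1 / M)) = 1 + x / M := by
        rw [Real.log_mul (Real.exp_ne_zero 1) (Real.rpow_pos_of_pos hr _).ne',
          Real.log_exp, Real.log_rpow hr]
        ring
      have hlb : Real.log (Real.exp M * r) = M + x := by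
        rw [Real.log_mul (Real.exp_ne_zero M) hr.ne', Real.log_exp]
      have hlmax : Real.log (max (Real.exp 1 * r ^ (1 / M)) (Real.exp M * r)) =
          max (1 + x / M) (M + x) := by
        rcases le_total (Real.exp 1 * r ^ (1 / M)) (Real.exp M * r) with h | h
        · rw [max_eq_right h, max_eq_right, hlb]
          rw [← hla, ← hlb]; exact Real.log_le_log ha h
        · rw [max_eq_left h, max_eq_left, hla]
          rw [← hla, ← hlb]; exact Real.log_le_log hb h
      have hlg : Real.log (gFun M r) = Real.log 4 + max (1 + x / M) (M + x) := by
        rw [gFun, if_neg hr1, Real.log_mul (by norm_num) (lt_max_iff.mpr (Or.inl ha)).ne',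
          hlmax]
      have hq : x / M * M = x := div_mul_cancel₀ x hM0.ne'
      have hqneg : x / M ≤ 0 := div_nonpos_of_nonpos_of_nonneg hx.le hM0.le
      have hAub : max (1 + x / M) (M + x) ≤ M := by
        apply max_le
        · linarith
        · linarith
      have hAlb : 1 + x ≤ max (1 + x / M) (M + x) := by
        have : x ≤ x / M := by nlinarith
        calc 1 + x ≤ 1 + x / M := by linarith
        _ ≤ _ := le_max_left _ _
      constructor
      · -- upper bound
        have habs : |Real.log (gFun M r)| ≤ 3 + M + L := by
          rw [hlg, abs_le]
          constructor
          · rw [hLx]; linarith [hAlb]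
          · linarith [hAub]
        nlinarith [mul_nonneg hM0.le hL0]
      · -- lower bound
        by_cases hc : L ≤ 8 * M
        · nlinarith [abs_nonneg (Real.log (gFun M r))]
        · push_neg at hc
          have hxL : x = -L := by rw [hLx]; ring
          -- here L > 8M, so max = 1 + x/M and it's very negative
          have hA : max (1 + x / M) (M + x) = 1 + x / M := by
            apply max_eq_left
            nlinarith
          have hlgneg : Real.log (gFun M r) = Real.log 4 + 1 + x / M := by
            rw [hlg, hA]; ring
          have hbig : L / (2*M) ≤ |Real.log (gFun M r)| := by
            have h1 : Real.log (gFun M r) ≤ 0 := by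
              rw [hlgneg]
              nlinarith
            rw [abs_of_nonpos h1, hlgneg]
            have hq2 : L / (2*M) * (2*M) = L := div_mul_cancel₀ L (by positivity)
            nlinarith
          have hexp : (1 + 8*M) * (1 + L/(2*M)) = 1 + 8*M + L/(2*M) + 4*L := by
            field_simp; ring
          have hmono : (1 + 8*M) * (1 + L/(2*M)) ≤
              (1 + 8*M) * (1 + |Real.log (gFun M r)|) := by
            have h1 : (1:ℝ) + L/(2*M) ≤ 1 + |Real.log (gFun M r)| := by linarith
            have h2 : (0:ℝ) ≤ 1 + 8*M := by linarith
            exact mul_le_mul_of_nonneg_left h1 h2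
          have hpos : 0 ≤ L/(2*M) := by positivity
          linarith
  obtain ⟨hup, hdown⟩ := key
  have hapos : (0:ℝ) < 1 + |Real.log (gFun M r)| := by positivity
  have hbpos : (0:ℝ) < 1 + L := by positivity
  have hKpos : (0:ℝ) < 1 + 8*M := by linarith
  have hratio : |Real.log ((1 + |Real.log (gFun M r)|) / (1 + L))| ≤ Real.log (1 + 8*M) := by
    rw [Real.log_div hapos.ne' hbpos.ne', abs_le]
    constructor
    · have : Real.log (1 + L) ≤ Real.log ((1 + 8*M) * (1 + |Real.log (gFun M r)|)) :=
        Real.log_le_log hbpos hdown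
      rw [Real.log_mul hKpos.ne' hapos.ne'] at this
      linarith
    · have : Real.log (1 + |Real.log (gFun M r)|) ≤ Real.log ((1 + 8*M) * (1 + L)) :=
        Real.log_le_log hapos hup
      rw [Real.log_mul hKpos.ne' hbpos.ne'] at this
      linarith
  have hfinal : Real.log (1 + 8*M) ≤ 7 * (1 + Real.log (1 + M)) := by
    have h1 : (1:ℝ) + 8*M ≤ 8 * (1 + M) := by linarith
    have h2 : Real.log (1 + 8*M) ≤ Real.log (8 * (1 + M)) :=
      Real.log_le_log (by linarith) h1
    rw [Real.log_mul (by norm_num) (by linarith)] at h2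
    have h8 : Real.log 8 ≤ 7 := by
      have := Real.log_le_sub_one_of_pos (show (0:ℝ) < 8 by norm_num)
      linarith
    have hM1 : (0:ℝ) ≤ Real.log (1 + M) := Real.log_nonneg (by linarith)
    linarith
  exact hratio.trans hfinal
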